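/- Assume in addition that B is nondegenerate, i.e., if B(v, w) = 0 for all w ∈ V then v = 0. Let A : V → V be a B-symmetric linear map whose range is finite-dimensional of dimension m ≥ 1. Then there exists a basis ψ₁, …, ψ_m of the range of A such that A f = Σ_{i=1}^{m} B(f, ψ_i) ψ_i for every f ∈ V. -/

import Mathlib

/-- a `B`-symmetric operator with finite-dimensional range of dimension
`m ≥ 1` (with `B` a nondegenerate symmetric bilinear form) admits a basis `ψ₁, …, ψ_m`
of its range such that `A f = Σᵢ B(f, ψᵢ) ψᵢ` (cf. Proposition 2.2 of the paper). -/
theorem stmt_3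
    {V : Type*} [AddCommGroup V] [Module ℂ V]
    (B : V →ₗ[ℂ] V →ₗ[ℂ] ℂ)
    (hsymm : ∀ u v : V, B u v = B v u)
    (hnd : ∀ v : V, (∀ w : V, B v w = 0) → v = 0)
    (A : V →ₗ[ℂ] V)
    (hAsymm : ∀ u v : V, B (A u) v = B u (A v))
    (m : ℕ) (hm : 1 ≤ m)
    (hfin : FiniteDimensional ℂ (LinearMap.range A))
    (hrank : Module.finrank ℂ (LinearMap.range A) = m) :
    ∃ ψ : Fin m → V,
      (∀ i, ψ i ∈ LinearMap.range A) ∧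
      LinearIndependent ℂ ψ ∧
      Submodule.span ℂ (Set.range ψ) = LinearMap.range A ∧
      ∀ f : V, A f = ∑ i, B f (ψ i) • ψ i := by
  classical
  -- choose a complement `S` of `ker A`
  obtain ⟨S, hS⟩ := Submodule.exists_isCompl (LinearMap.ker A)
  -- `S` is finite dimensional of dimension `m`
  let eQ : (V ⧸ LinearMap.ker A) ≃ₗ[ℂ] S :=
    Submodule.quotientEquivOfIsCompl _ _ hS
  let eR : (V ⧸ LinearMap.ker A) ≃ₗ[ℂ] LinearMap.range A := A.quotKerEquivRange
  haveI : FiniteDimensional ℂ (V ⧸ LinearMap.ker A) := eR.symm.finiteDimensional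
  haveI : FiniteDimensional ℂ S := eQ.finiteDimensional
  have hSrank : Module.finrank ℂ S = m := by
    rw [← eQ.finrank_eq, eR.finrank_eq, hrank]
  -- the restriction of `A` to `S`
  set L : S →ₗ[ℂ] V := A.comp S.subtype with hL
  have hLapp : ∀ s : S, L s = A (s : V) := fun s => rfl
  -- `L` is injective
  have hLinj : Function.Injective L := by
    rw [← LinearMap.ker_eq_bot]
    rw [Submodule.eq_bot_iff]
    intro x hx
    have hx' : (x : V) ∈ LinearMap.ker A ⊓ S := ⟨hx, x.2⟩
    rw [hS.inf_eq_bot] at hx'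
    exact Subtype.ext hx'
  -- the bilinear form `C s t = B (A s) t` on `S`
  set C : LinearMap.BilinForm ℂ S := B.compl₁₂ L S.subtype with hC
  have hCapp : ∀ s t : S, C s t = B (A (s : V)) (t : V) := fun s t => rfl
  -- key: if `B (A u) t = 0` for all `t ∈ S` then `A u = 0`
  have hkey : ∀ u : V, (∀ t : S, B (A u) (t : V) = 0) → A u = 0 := by
    intro u hu
    apply hnd
    intro w
    obtain ⟨k, t, hk, ht, rfl⟩ := Submodule.codisjoint_iff_exists_add_eq.mp hS.codisjoint w
    rw [map_add, hAsymm u k, (LinearMap.mem_ker.mp hk : A k = 0), map_zero,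
      hu ⟨t, ht⟩, zero_add]
  -- `C` is symmetric
  have hCsymm : C.IsSymm := by
    refine ⟨fun s t => ?_⟩
    simp only [hCapp, RingHom.id_apply]
    rw [hAsymm, hsymm]
  -- `C` is nondegenerate
  have hCnd : C.Nondegenerate := by
    refine ⟨?_, ?_⟩
    · intro s hs
      apply hLinj
      rw [map_zero, hLapp]
      exact hkey _ fun t => hs t
    · intro s hs
      apply hLinj
      rw [map_zero, hLapp]
      exact hkey _ fun t => by rw [← hCapp, hCsymm.eq]; exact hs t
  -- orthogonal basis for `C`
  obtain ⟨v₀, hv₀⟩ := LinearMap.BilinForm.exists_orthogonal_basis (LinearMap.BilinForm.isSymm_iff.mp hCsymm)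
  let v : Module.Basis (Fin m) ℂ S := v₀.reindex (finCongr hSrank)
  have hv : C.iIsOrtho v := by
    intro i j hij
    simp only [v, Module.Basis.coe_reindex, Function.comp_apply]
    exact hv₀ fun h => hij ((finCongr hSrank).symm.injective h)
  have hvne : ∀ i, C (v i) (v i) ≠ 0 := fun i =>
    hv.not_isOrtho_basis_self_of_nondegenerate hCnd i
  -- scale to an orthonormal basis
  have hsqrt : ∀ i, ∃ c : ℂ, c ^ 2 = C (v i) (v i) := fun i =>
    IsAlgClosed.exists_pow_nat_eq _ two_pos
  choose c hc using hsqrt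
  have hcne : ∀ i, c i ≠ 0 := by
    intro i h
    apply hvne i
    rw [← hc i, h]; ring
  let w : Fin m → ℂˣ := fun i => (Units.mk0 (c i) (hcne i))⁻¹
  let e : Module.Basis (Fin m) ℂ S := v.unitsSMul w
  have heapp : ∀ i, e i = (c i)⁻¹ • v i := by
    intro i
    simp [e, w, Module.Basis.unitsSMul_apply, Units.smul_def]
  have hortho : ∀ i j, C (e i) (e j) = if i = j then 1 else 0 := by
    intro i j
    rw [heapp, heapp]
    simp only [map_smul, LinearMap.smul_apply, smul_eq_mul]
    by_cases hij : i = j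
    · subst hij
      rw [if_pos rfl]
      have h2 : C (v i) (v i) = c i * c i := by rw [← hc i]; ring
      rw [h2]
      field_simp [hcne i]
    · rw [if_neg hij, hv hij]
      simp
  -- the desired family
  refine ⟨fun i => L (e i), fun i => ⟨e i, rfl⟩, ?_, ?_, ?_⟩
  · exact (e.linearIndependent.map' L (LinearMap.ker_eq_bot.mpr hLinj))
  · -- span
    apply le_antisymm
    · rw [Submodule.span_le]
      rintro _ ⟨i, rfl⟩
      exact ⟨e i, rfl⟩
    · rintro _ ⟨u, rfl⟩
      obtain ⟨k, t, hk, ht, rfl⟩ := Submodule.codisjoint_iff_exists_add_eq.mp hS.codisjoint u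
      rw [map_add, (LinearMap.mem_ker.mp hk : A k = 0), zero_add]
      have : A t = L ⟨t, ht⟩ := rfl
      rw [this, ← e.sum_repr ⟨t, ht⟩, map_sum]
      apply Submodule.sum_mem
      intro i _
      rw [map_smul]
      exact Submodule.smul_mem _ _ (Submodule.subset_span ⟨i, rfl⟩)
  · -- the representation formula
    intro f
    obtain ⟨k, t, hk, ht, rfl⟩ := Submodule.codisjoint_iff_exists_add_eq.mp hS.codisjoint f
    have hAk : A k = 0 := LinearMap.mem_ker.mp hk
    have hAf : A (k + t) = L ⟨t, ht⟩ := by rw [map_add, hAk, zero_add]; rfl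
    -- coefficients agree with `C`
    have hcoef : ∀ i, B (k + t) (L (e i)) = C ⟨t, ht⟩ (e i) := by
      intro i
      rw [hLapp, ← hAsymm, hAf, hLapp, ← hCapp]
    -- the element `⟨t,ht⟩ - ∑ C t eᵢ • eᵢ` pairs to zero with everything in `S`
    have hrep : (⟨t, ht⟩ : S) = ∑ i, C ⟨t, ht⟩ (e i) • e i := by
      have hz : ∀ j, C ((⟨t, ht⟩ : S) - ∑ i, C ⟨t, ht⟩ (e i) • e i) (e j) = 0 := by
        intro j
        rw [map_sub, LinearMap.sub_apply, map_sum, LinearMap.sum_apply]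
        have : ∀ i, C (C (⟨t, ht⟩ : S) (e i) • e i) (e j)
            = C ⟨t, ht⟩ (e i) * (if i = j then 1 else 0) := by
          intro i
          rw [map_smul, ← hortho i j]; rfl
        rw [Finset.sum_congr rfl fun i _ => this i]
        simp
      have hz' : A (((⟨t, ht⟩ : S) - ∑ i, C ⟨t, ht⟩ (e i) • e i : S) : V) = 0 := by
        apply hkey
        intro u
        -- expand `u` in the basis `e`
        have hu : C ((⟨t, ht⟩ : S) - ∑ i, C ⟨t, ht⟩ (e i) • e i) u = 0 := by
          conv_lhs => rw [← e.sum_repr u]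
          rw [map_sum]
          refine Finset.sum_eq_zero fun j _ => ?_
          rw [map_smul, hz j, smul_zero]
        exact hu
      have : ((⟨t, ht⟩ : S) - ∑ i, C ⟨t, ht⟩ (e i) • e i : S) = 0 := by
        apply hLinj
        rw [map_zero, hLapp, hz']
      exact sub_eq_zero.mp this
    calc A (k + t) = L ⟨t, ht⟩ := hAf
      _ = L (∑ i, C ⟨t, ht⟩ (e i) • e i) := by rw [← hrep]
      _ = ∑ i, B (k + t) (L (e i)) • L (e i) := by
          rw [map_sum]
          exact Finset.sum_congr rfl fun i _ => by rw [map_smul, hcoef]
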